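/- With B_θ as above, the closed unit ball {w ∈ B_θ : ‖w‖_θ ≤ c} is compact in the L¹(μ) topology, for any c > 0. -/

import Mathlib

open MeasureTheory Filter ENNReal
open Topology

noncomputable section

/-- The left shift on one-sided sequences. -/
def shiftSeq {α : Type*} : (ℕ → α) → ℕ → α := fun x n => x (n + 1)

/-- The cylinder of length `n` centred at `x`. -/
def cyl {α : Type*} (x : ℕ → α) (n : ℕ) : Set (ℕ → α) := {y | ∀ i < n, y i = x i}

/-- `osc(w, m, x)`: the essential supremum of `|w(y) − w(z)|` over `y, z` in the
cylinder `[x]_m` (with respect to `μ`). -/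
def oscE {α : Type*} [MeasurableSpace α] (μ : Measure (ℕ → α))
    (w : (ℕ → α) → ℝ) (m : ℕ) (x : ℕ → α) : ℝ≥0∞ :=
  essSup (fun p : (ℕ → α) × (ℕ → α) => ENNReal.ofReal |w p.1 - w p.2|)
    ((μ.restrict (cyl x m)).prod (μ.restrict (cyl x m)))

/-- The seminorm `|w|_θ = sup_{m ≥ 1} θ^{-m} ∫ osc(w, m, ·) dμ`. -/
def thetaSemi {α : Type*} [MeasurableSpace α] (μ : Measure (ℕ → α)) (θ : ℝ)
    (w : (ℕ → α) → ℝ) : ℝ≥0∞ :=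
  ⨆ m : ℕ, ⨆ _ : 1 ≤ m, (ENNReal.ofReal θ ^ m)⁻¹ * ∫⁻ x, oscE μ w m x ∂μ

/-- The norm `‖w‖_θ = |w|_θ + ‖w‖_{L¹(μ)}`. -/
def thetaNorm {α : Type*} [MeasurableSpace α] (μ : Measure (ℕ → α)) (θ : ℝ)
    (w : (ℕ → α) → ℝ) : ℝ≥0∞ :=
  thetaSemi μ θ w + ∫⁻ x, ENNReal.ofReal |w x| ∂μ

namespace ThetaAux

variable {l : ℕ}

/-- restriction of a sequence to its first `m` coordinates -/
def res (m : ℕ) (x : ℕ → Fin l) : Fin m → Fin l := fun i => x i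

lemma measurable_res (m : ℕ) : Measurable (res (l := l) m) :=
  measurable_pi_lambda _ fun i => measurable_pi_apply _

/-- The cylinder associated to a word. -/
def cylW {m : ℕ} (a : Fin m → Fin l) : Set (ℕ → Fin l) := res m ⁻¹' {a}

instance {m : ℕ} : MeasurableSingletonClass (Fin m → Fin l) :=
  ⟨fun a => by
    have : ({a} : Set (Fin m → Fin l)) = ⋂ i, (fun b : Fin m → Fin l => b i) ⁻¹' {a i} := by
      ext b; simp [funext_iff]
    rw [this]
    exact MeasurableSet.iInter fun i => measurable_pi_apply i (measurableSet_singleton _)⟩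

lemma measurableSet_cylW {m : ℕ} (a : Fin m → Fin l) : MeasurableSet (cylW a) :=
  measurable_res m (measurableSet_singleton a)

lemma mem_cylW {m : ℕ} {a : Fin m → Fin l} {y : ℕ → Fin l} : y ∈ cylW a ↔ res m y = a :=
  Iff.rfl

lemma cyl_eq_cylW (x : ℕ → Fin l) (m : ℕ) : cyl x m = cylW (res m x) := by
  ext y
  simp only [cyl, Set.mem_setOf_eq, mem_cylW, funext_iff, res]
  constructor
  · intro h i; exact h i i.isLt
  · intro h i hi; exact h ⟨i, hi⟩

lemma iUnion_cylW (m : ℕ) : (⋃ a : Fin m → Fin l, cylW a) = Set.univ := by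
  ext x
  simp only [Set.mem_iUnion, Set.mem_univ, iff_true]
  exact ⟨res m x, rfl⟩

lemma pairwise_cylW (m : ℕ) :
    Pairwise (Function.onFun Disjoint (cylW (l := l) (m := m))) := by
  intro a b hab
  rw [Function.onFun, Set.disjoint_left]
  intro x hx hx'
  exact hab ((mem_cylW.mp hx).symm.trans (mem_cylW.mp hx'))

lemma lintegral_eq_tsum (μ : Measure (ℕ → Fin l)) (h : (ℕ → Fin l) → ℝ≥0∞) (m : ℕ) :
    ∫⁻ x, h x ∂μ = ∑' a : Fin m → Fin l, ∫⁻ x in cylW a, h x ∂μ := by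
  rw [← lintegral_iUnion (fun a => measurableSet_cylW a) (pairwise_cylW m) h,
    iUnion_cylW, Measure.restrict_univ]

/-- oscillation over the cylinder of a word -/
def oscW (μ : Measure (ℕ → Fin l)) (w : (ℕ → Fin l) → ℝ) {m : ℕ} (a : Fin m → Fin l) : ℝ≥0∞ :=
  essSup (fun p : (ℕ → Fin l) × (ℕ → Fin l) => ENNReal.ofReal |w p.1 - w p.2|)
    ((μ.restrict (cylW a)).prod (μ.restrict (cylW a)))

lemma oscE_eq (μ : Measure (ℕ → Fin l)) (w : (ℕ → Fin l) → ℝ) (m : ℕ) (x : ℕ → Fin l) :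
    oscE μ w m x = oscW μ w (res m x) := by
  rw [oscE, oscW, cyl_eq_cylW]

lemma measurable_oscE (μ : Measure (ℕ → Fin l)) (w : (ℕ → Fin l) → ℝ) (m : ℕ) :
    Measurable (fun x => oscE μ w m x) := by
  have : (fun x => oscE μ w m x) = (fun a : Fin m → Fin l => oscW μ w a) ∘ res m :=
    funext (oscE_eq μ w m)
  rw [this]
  exact (measurable_of_countable _).comp (measurable_res m)

lemma cylW_pos [Nonempty (Fin l)] (μ : Measure (ℕ → Fin l))
    (hfull : ∀ (x : ℕ → Fin l) (n : ℕ), 0 < μ (cyl x n)) {m : ℕ} (a : Fin m → Fin l) :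
    0 < μ (cylW a) := by
  classical
  set x : ℕ → Fin l := fun n => if h : n < m then a ⟨n, h⟩ else Classical.arbitrary _ with hx
  have hres : res m x = a := by
    funext i
    simp [res, hx, i.isLt]
  have := hfull x m
  rwa [cyl_eq_cylW, hres] at this

/-- average of `w` over the cylinder of the word `a` -/
def avg (μ : Measure (ℕ → Fin l)) (w : (ℕ → Fin l) → ℝ) {m : ℕ} (a : Fin m → Fin l) : ℝ :=
  (∫ y in cylW a, w y ∂μ) / (μ (cylW a)).toReal

/-- conditional-expectation-like projection on cylinders of length `m` -/
def Em (μ : Measure (ℕ → Fin l)) (w : (ℕ → Fin l) → ℝ) (m : ℕ) (x : ℕ → Fin l) : ℝ :=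
  avg μ w (res m x)

lemma measurable_Em (μ : Measure (ℕ → Fin l)) (w : (ℕ → Fin l) → ℝ) (m : ℕ) :
    Measurable (Em μ w m) :=
  (measurable_of_countable (fun a : Fin m → Fin l => avg μ w a)).comp (measurable_res m)

lemma setLIntegral_oscE (μ : Measure (ℕ → Fin l)) (w : (ℕ → Fin l) → ℝ) (m : ℕ)
    (a : Fin m → Fin l) :
    ∫⁻ x in cylW a, oscE μ w m x ∂μ = oscW μ w a * μ (cylW a) := by
  rw [setLIntegral_congr_fun (measurableSet_cylW a)
    (fun x hx => by rw [oscE_eq, mem_cylW.mp hx])]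
  exact setLIntegral_const _ _

end ThetaAux

namespace ThetaAux
variable {l : ℕ}

lemma core (μ : Measure (ℕ → Fin l)) [IsProbabilityMeasure μ] (w : (ℕ → Fin l) → ℝ)
    (hw : Integrable w μ) {m : ℕ} (a : Fin m → Fin l)
    (h0 : μ (cylW a) ≠ 0) (hosc : oscW μ w a ≠ ∞) :
    ∀ᵐ y ∂(μ.restrict (cylW a)), ENNReal.ofReal |w y - avg μ w a| ≤ oscW μ w a := by
  set A := cylW a with hA
  set M := (oscW μ w a).toReal with hM
  have hAfin : μ A ≠ ∞ := measure_ne_top μ A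
  have hT : 0 < (μ A).toReal := ENNReal.toReal_pos h0 hAfin
  have hsl : ∀ᵐ y ∂μ.restrict A, ∀ᵐ z ∂μ.restrict A,
      ENNReal.ofReal |w y - w z| ≤ oscW μ w a :=
    Measure.ae_ae_of_ae_prod (ae_le_essSup _)
  filter_upwards [hsl] with y hy
  have hz : ∀ᵐ z ∂μ.restrict A, |w y - w z| ≤ M := by
    filter_upwards [hy] with z hz
    exact (ENNReal.ofReal_le_iff_le_toReal hosc).mp hz
  have hws : IntegrableOn w A μ := hw.integrableOn
  have hconst : Integrable (fun _ : ℕ → Fin l => w y) (μ.restrict A) := integrable_const _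
  have key : w y - avg μ w a = (∫ z in A, (w y - w z) ∂μ) / (μ A).toReal := by
    rw [integral_sub hconst hws, integral_const]
    simp only [measureReal_def, Measure.restrict_apply_univ, smul_eq_mul]
    rw [avg, ← hA]
    field_simp
  have hint : Integrable (fun z => |w y - w z|) (μ.restrict A) := (hconst.sub hws).abs
  have habs : |w y - avg μ w a| ≤ M := by
    rw [key, abs_div, abs_of_pos hT, div_le_iff₀ hT]
    calc |∫ z in A, (w y - w z) ∂μ| ≤ ∫ z in A, |w y - w z| ∂μ := by
          simpa [Real.norm_eq_abs] using
            norm_integral_le_integral_norm (μ := μ.restrict A) (fun z => w y - w z)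
      _ ≤ ∫ _z in A, M ∂μ := integral_mono_ae hint (integrable_const _) hz
      _ = M * (μ A).toReal := by
          rw [integral_const]; simp [measureReal_def, Measure.restrict_apply_univ, mul_comm]
  calc ENNReal.ofReal |w y - avg μ w a| ≤ ENNReal.ofReal M := ENNReal.ofReal_le_ofReal habs
    _ = oscW μ w a := ENNReal.ofReal_toReal hosc

lemma KE1 [Nonempty (Fin l)] (μ : Measure (ℕ → Fin l)) [IsProbabilityMeasure μ]
    (hfull : ∀ (x : ℕ → Fin l) (n : ℕ), 0 < μ (cyl x n))
    (w : (ℕ → Fin l) → ℝ) (hw : Integrable w μ) (m : ℕ)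
    (hosc : ∀ a : Fin m → Fin l, oscW μ w a ≠ ∞) :
    ∫⁻ x, ENNReal.ofReal |w x - Em μ w m x| ∂μ ≤ ∫⁻ x, oscE μ w m x ∂μ := by
  rw [lintegral_eq_tsum μ _ m, lintegral_eq_tsum μ (fun x => oscE μ w m x) m]
  refine ENNReal.tsum_le_tsum fun a => ?_
  rw [setLIntegral_oscE]
  have h0 : μ (cylW a) ≠ 0 := (cylW_pos μ hfull a).ne'
  calc ∫⁻ x in cylW a, ENNReal.ofReal |w x - Em μ w m x| ∂μ
      = ∫⁻ x in cylW a, ENNReal.ofReal |w x - avg μ w a| ∂μ := by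
        refine setLIntegral_congr_fun (measurableSet_cylW a) (fun x hx => ?_)
        rw [Em, mem_cylW.mp hx]
    _ ≤ ∫⁻ _x in cylW a, oscW μ w a ∂μ :=
        lintegral_mono_ae (core μ w hw a h0 (hosc a))
    _ = oscW μ w a * μ (cylW a) := setLIntegral_const _ _

lemma KE2 {θ c : ℝ} (μ : Measure (ℕ → Fin l)) (w : (ℕ → Fin l) → ℝ) (hθ : 0 < θ)
    (hb : thetaNorm μ θ w ≤ ENNReal.ofReal c) {m : ℕ} (hm : 1 ≤ m) :
    ∫⁻ x, oscE μ w m x ∂μ ≤ ENNReal.ofReal c * ENNReal.ofReal θ ^ m := by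
  set t := ENNReal.ofReal θ ^ m with htdef
  have ht : t ≠ 0 := pow_ne_zero _ (by simp only [ne_eq, ENNReal.ofReal_eq_zero, not_le]; linarith)
  have ht' : t ≠ ∞ := ENNReal.pow_ne_top ENNReal.ofReal_ne_top
  have h1 : t⁻¹ * ∫⁻ x, oscE μ w m x ∂μ ≤ ENNReal.ofReal c := by
    refine le_trans ?_ hb
    refine le_trans ?_ (le_self_add (a := thetaSemi μ θ w))
    rw [thetaSemi]
    exact le_iSup_of_le m (le_iSup_of_le hm le_rfl)
  calc ∫⁻ x, oscE μ w m x ∂μ = t * (t⁻¹ * ∫⁻ x, oscE μ w m x ∂μ) := by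
        rw [← mul_assoc, ENNReal.mul_inv_cancel ht ht', one_mul]
    _ ≤ t * ENNReal.ofReal c := mul_le_mul_right h1 _
    _ = ENNReal.ofReal c * t := mul_comm _ _

lemma oscW_ne_top [Nonempty (Fin l)] (μ : Measure (ℕ → Fin l)) [IsProbabilityMeasure μ]
    (hfull : ∀ (x : ℕ → Fin l) (n : ℕ), 0 < μ (cyl x n))
    (w : (ℕ → Fin l) → ℝ) {m : ℕ} (hfin : ∫⁻ x, oscE μ w m x ∂μ ≠ ∞)
    (a : Fin m → Fin l) : oscW μ w a ≠ ∞ := by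
  intro htop
  apply hfin
  rw [lintegral_eq_tsum μ _ m]
  refine ENNReal.tsum_eq_top_of_eq_top ⟨a, ?_⟩
  rw [setLIntegral_oscE, htop, ENNReal.top_mul (cylW_pos μ hfull a).ne']

lemma tri2 (μ : Measure (ℕ → Fin l)) (F P G : (ℕ → Fin l) → ℝ)
    (hFP : Measurable fun x => ENNReal.ofReal |F x - P x|) :
    ∫⁻ x, ENNReal.ofReal |F x - G x| ∂μ ≤
      (∫⁻ x, ENNReal.ofReal |F x - P x| ∂μ) + ∫⁻ x, ENNReal.ofReal |P x - G x| ∂μ := by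
  rw [← lintegral_add_left hFP]
  refine lintegral_mono fun x => ?_
  calc ENNReal.ofReal |F x - G x| ≤ ENNReal.ofReal (|F x - P x| + |P x - G x|) :=
        ENNReal.ofReal_le_ofReal (abs_sub_le _ _ _)
    _ ≤ _ := ENNReal.ofReal_add_le

lemma liminf_superadd (u v : ℕ → ℝ≥0∞) :
    (atTop.liminf u) + atTop.liminf v ≤ atTop.liminf (fun j => u j + v j) := by
  rw [liminf_eq_iSup_iInf_of_nat, liminf_eq_iSup_iInf_of_nat, liminf_eq_iSup_iInf_of_nat,
    ENNReal.iSup_add_iSup_of_monotone (f := fun n => ⨅ i ≥ n, u i)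
      (g := fun n => ⨅ i ≥ n, v i)]
  · refine iSup_mono fun n => ?_
    refine le_iInf₂ fun i hi => ?_
    exact add_le_add (iInf₂_le i hi) (iInf₂_le i hi)
  · intro n n' hn
    exact le_iInf₂ fun i hi => iInf₂_le i (le_trans hn hi)
  · intro n n' hn
    exact le_iInf₂ fun i hi => iInf₂_le i (le_trans hn hi)

lemma liminf_const_mul (c : ℝ≥0∞) (u : ℕ → ℝ≥0∞) :
    c * atTop.liminf u ≤ atTop.liminf (fun j => c * u j) := by
  rw [liminf_eq_iSup_iInf_of_nat, liminf_eq_iSup_iInf_of_nat, ENNReal.mul_iSup]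
  refine iSup_mono fun n => ?_
  exact le_iInf₂ fun i hi => mul_le_mul_right (iInf₂_le i hi) c

end ThetaAux
open ThetaAux in
/-- The ball `{w ∈ B_θ : ‖w‖_θ ≤ c}` is compact in the `L¹(μ)` topology:
every sequence in it has a subsequence converging in `L¹(μ)` to a member of the ball. -/
theorem thetaNorm_ball_L1_compact {l : ℕ} (θ : ℝ) (hθ : 0 < θ) (hθ1 : θ < 1)
    (μ : Measure (ℕ → Fin l)) [IsProbabilityMeasure μ]
    (hfull : ∀ (x : ℕ → Fin l) (n : ℕ), 0 < μ (cyl x n))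
    (c : ℝ) (hc : 0 < c)
    (f : ℕ → (ℕ → Fin l) → ℝ)
    (hmeas : ∀ k, Measurable (f k))
    (hball : ∀ k, thetaNorm μ θ (f k) ≤ ENNReal.ofReal c) :
    ∃ g : ℕ → ℕ, StrictMono g ∧
      ∃ flim : (ℕ → Fin l) → ℝ, Measurable flim ∧
        thetaNorm μ θ flim ≤ ENNReal.ofReal c ∧
        Tendsto (fun k => ∫⁻ x, ENNReal.ofReal |f (g k) x - flim x| ∂μ)
          atTop (nhds 0) := by
  classical
  have hne : Nonempty (Fin l) := by
    rcases Nat.eq_zero_or_pos l with rfl | hl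
    · exfalso
      have h1 : μ Set.univ = 1 := measure_univ
      have h2 : (Set.univ : Set (ℕ → Fin 0)) = ∅ := by
        ext x; exact (x 0).elim0
      rw [h2, measure_empty] at h1
      exact zero_ne_one h1
    · exact ⟨⟨0, hl⟩⟩
  set t : ℝ≥0∞ := ENNReal.ofReal θ with htdef
  have ht1 : t < 1 := by rw [htdef]; exact ENNReal.ofReal_lt_one.mpr hθ1
  have htne : t ≠ ∞ := ENNReal.ofReal_ne_top
  set cB : ℝ≥0∞ := ENNReal.ofReal c with hcB
  have hcBne : cB ≠ ∞ := ENNReal.ofReal_ne_top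
  have mOf : ∀ F G : (ℕ → Fin l) → ℝ, Measurable F → Measurable G →
      Measurable fun x => ENNReal.ofReal |F x - G x| :=
    fun F G hF hG => ((hF.sub hG).abs).ennreal_ofReal
  have hL1 : ∀ k, ∫⁻ x, ENNReal.ofReal |f k x| ∂μ ≤ cB := by
    intro k
    calc ∫⁻ x, ENNReal.ofReal |f k x| ∂μ ≤ thetaNorm μ θ (f k) := by
          rw [thetaNorm]; exact le_add_self
      _ ≤ cB := hball k
  have hInt : ∀ k, Integrable (f k) μ := by
    intro k
    refine ⟨(hmeas k).aestronglyMeasurable, ?_⟩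
    rw [hasFiniteIntegral_iff_norm]
    simp only [Real.norm_eq_abs]
    exact lt_of_le_of_lt (hL1 k) (lt_of_le_of_lt le_rfl hcBne.lt_top)
  have hOscI : ∀ k m, 1 ≤ m → ∫⁻ x, oscE μ (f k) m x ∂μ ≤ cB * t ^ m :=
    fun k m hm => KE2 μ (f k) hθ (hball k) hm
  have hI : ∀ k m, 1 ≤ m →
      ∫⁻ x, ENNReal.ofReal |f k x - Em μ (f k) m x| ∂μ ≤ cB * t ^ m := by
    intro k m hm
    refine le_trans (KE1 μ hfull (f k) (hInt k) m ?_) (hOscI k m hm)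
    intro a
    refine oscW_ne_top μ hfull (f k) ?_ a
    exact ne_top_of_le_ne_top (ENNReal.mul_ne_top hcBne (ENNReal.pow_ne_top htne))
      (hOscI k m hm)
  -- compactness of averages
  set Φ : ℕ → ∀ m : ℕ, (Fin m → Fin l) → ℝ := fun k m a => avg μ (f k) a with hΦ
  have habs : ∀ k, ∫ x, |f k x| ∂μ ≤ c := by
    intro k
    rw [integral_eq_lintegral_of_nonneg_ae (ae_of_all μ fun x => abs_nonneg _)
      ((hmeas k).abs.aestronglyMeasurable)]
    calc (∫⁻ x, ENNReal.ofReal |f k x| ∂μ).toReal ≤ cB.toReal :=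
          ENNReal.toReal_mono hcBne (hL1 k)
      _ = c := ENNReal.toReal_ofReal hc.le
  have hΦmem : ∀ k, Φ k ∈ Set.univ.pi fun m : ℕ => Set.univ.pi fun a : Fin m → Fin l =>
      Set.Icc (-(c / (μ (cylW a)).toReal)) (c / (μ (cylW a)).toReal) := by
    intro k
    rw [Set.mem_univ_pi]
    intro m
    rw [Set.mem_univ_pi]
    intro a
    have hTpos : 0 < (μ (cylW a)).toReal :=
      ENNReal.toReal_pos (cylW_pos μ hfull a).ne' (measure_ne_top μ _)
    rw [Set.mem_Icc, ← abs_le]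
    have h2 : |∫ y in cylW a, f k y ∂μ| ≤ c := by
      calc |∫ y in cylW a, f k y ∂μ| ≤ ∫ y in cylW a, |f k y| ∂μ := by
            simpa [Real.norm_eq_abs] using
              norm_integral_le_integral_norm (μ := μ.restrict (cylW a)) (f k)
        _ ≤ ∫ y, |f k y| ∂μ :=
            setIntegral_le_integral (hInt k).abs (ae_of_all μ fun x => abs_nonneg _)
        _ ≤ c := habs k
    show |avg μ (f k) a| ≤ c / (μ (cylW a)).toReal
    rw [avg, abs_div, abs_of_pos hTpos]
    gcongr
  have hKcompact : IsCompact (Set.univ.pi fun m : ℕ => Set.univ.pi fun a : Fin m → Fin l =>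
      Set.Icc (-(c / (μ (cylW a)).toReal)) (c / (μ (cylW a)).toReal)) :=
    isCompact_univ_pi fun m => isCompact_univ_pi fun a => isCompact_Icc
  obtain ⟨v, -, g, hg, hconv⟩ := hKcompact.tendsto_subseq hΦmem
  have hcoord : ∀ (m : ℕ) (a : Fin m → Fin l),
      Tendsto (fun k => avg μ (f (g k)) a) atTop (𝓝 (v m a)) := by
    intro m a
    exact tendsto_pi_nhds.mp (tendsto_pi_nhds.mp hconv m) a
  set hseq : ℕ → (ℕ → Fin l) → ℝ := fun m x => v m (res m x) with hhseq
  have hhmeas : ∀ m, Measurable (hseq m) := fun m =>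
    (measurable_of_countable (v m)).comp (measurable_res m)
  -- L¹ convergence of projections to hseq
  have hJ : ∀ m : ℕ,
      Tendsto (fun k => ∫⁻ x, ENNReal.ofReal |Em μ (f (g k)) m x - hseq m x| ∂μ)
        atTop (𝓝 0) := by
    intro m
    have heq : ∀ k, ∫⁻ x, ENNReal.ofReal |Em μ (f (g k)) m x - hseq m x| ∂μ =
        ∑ a : Fin m → Fin l, ENNReal.ofReal |avg μ (f (g k)) a - v m a| * μ (cylW a) := by
      intro k
      rw [lintegral_eq_tsum μ _ m, tsum_fintype]
      refine Finset.sum_congr rfl fun a _ => ?_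
      have hconst : ∫⁻ x in cylW a, ENNReal.ofReal |Em μ (f (g k)) m x - hseq m x| ∂μ
          = ∫⁻ _x in cylW a, ENNReal.ofReal |avg μ (f (g k)) a - v m a| ∂μ := by
        refine setLIntegral_congr_fun (measurableSet_cylW a) (fun x hx => ?_)
        have hx' : res m x = a := mem_cylW.mp hx
        simp only [Em, hhseq, hx']
      rw [hconst, setLIntegral_const]
    simp only [heq]
    have h0 : (0 : ℝ≥0∞) = ∑ _a : Fin m → Fin l, (0 : ℝ≥0∞) := by simp
    rw [h0]
    refine tendsto_finset_sum _ fun a _ => ?_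
    have h1 : Tendsto (fun k => |avg μ (f (g k)) a - v m a|) atTop (𝓝 0) := by
      have h2 := ((hcoord m a).sub (tendsto_const_nhds (x := v m a))).abs
      simpa using h2
    have h3 : Tendsto (fun k => ENNReal.ofReal |avg μ (f (g k)) a - v m a|) atTop (𝓝 0) := by
      simpa using ENNReal.tendsto_ofReal h1
    simpa using ENNReal.Tendsto.mul_const h3 (Or.inr (measure_ne_top μ _))
  -- symmetric lintegral
  have hsymm : ∀ F G : (ℕ → Fin l) → ℝ,
      ∫⁻ x, ENNReal.ofReal |F x - G x| ∂μ = ∫⁻ x, ENNReal.ofReal |G x - F x| ∂μ :=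
    fun F G => lintegral_congr fun x => by rw [abs_sub_comm]
  -- Cauchy property of the hseq
  have hCauchy : ∀ m m', 1 ≤ m → 1 ≤ m' →
      ∫⁻ x, ENNReal.ofReal |hseq m x - hseq m' x| ∂μ ≤ cB * t ^ m + cB * t ^ m' := by
    intro m m' hm hm'
    have hstep : ∀ k, ∫⁻ x, ENNReal.ofReal |hseq m x - hseq m' x| ∂μ ≤
        (∫⁻ x, ENNReal.ofReal |Em μ (f (g k)) m x - hseq m x| ∂μ) + cB * t ^ m + cB * t ^ m'
          + ∫⁻ x, ENNReal.ofReal |Em μ (f (g k)) m' x - hseq m' x| ∂μ := by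
      intro k
      have c1 := tri2 μ (hseq m) (Em μ (f (g k)) m) (hseq m')
        (mOf _ _ (hhmeas m) (measurable_Em μ _ m))
      have c2 := tri2 μ (Em μ (f (g k)) m) (f (g k)) (hseq m')
        (mOf _ _ (measurable_Em μ _ m) (hmeas _))
      have c3 := tri2 μ (f (g k)) (Em μ (f (g k)) m') (hseq m')
        (mOf _ _ (hmeas _) (measurable_Em μ _ m'))
      refine le_trans c1 ?_
      rw [hsymm (hseq m) (Em μ (f (g k)) m)]
      rw [add_assoc, add_assoc]
      refine add_le_add_right ?_ _
      refine le_trans c2 ?_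
      have hEm : ∫⁻ x, ENNReal.ofReal |Em μ (f (g k)) m x - f (g k) x| ∂μ ≤ cB * t ^ m := by
        rw [hsymm]; exact hI (g k) m hm
      refine le_trans (add_le_add hEm c3) ?_
      exact add_le_add_right (add_le_add (hI (g k) m' hm') le_rfl) _
    have hlim : Tendsto (fun k =>
        (∫⁻ x, ENNReal.ofReal |Em μ (f (g k)) m x - hseq m x| ∂μ) + cB * t ^ m + cB * t ^ m'
          + ∫⁻ x, ENNReal.ofReal |Em μ (f (g k)) m' x - hseq m' x| ∂μ) atTop
        (𝓝 (0 + cB * t ^ m + cB * t ^ m' + 0)) :=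
      (((hJ m).add tendsto_const_nhds).add tendsto_const_nhds).add (hJ m')
    have := ge_of_tendsto hlim (Eventually.of_forall fun k => hstep k)
    simpa using this
  -- almost everywhere convergence of hseq to a limit
  have haelim : ∀ᵐ x ∂μ, ∃ L : ℝ, Tendsto (fun m => hseq (m + 1) x) atTop (𝓝 L) := by
    have hle : ∀ m : ℕ, ∫⁻ x, ENNReal.ofReal |hseq (m + 2) x - hseq (m + 1) x| ∂μ ≤
        2 * cB * t ^ (m + 1) := by
      intro m
      refine le_trans (hCauchy (m + 2) (m + 1) (by omega) (by omega)) ?_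
      have : cB * t ^ (m + 2) ≤ cB * t ^ (m + 1) := by
        rw [pow_succ]
        exact mul_le_mul_right (mul_le_of_le_one_right' ht1.le) cB
      calc cB * t ^ (m + 2) + cB * t ^ (m + 1) ≤ cB * t ^ (m+1) + cB * t ^ (m+1) :=
            add_le_add_left this _
        _ = 2 * cB * t ^ (m + 1) := by ring
    have hsumfin : (∑' m : ℕ, ∫⁻ x, ENNReal.ofReal |hseq (m + 2) x - hseq (m + 1) x| ∂μ) ≠ ∞ := by
      refine ne_top_of_le_ne_top ?_ (ENNReal.tsum_le_tsum hle)
      rw [ENNReal.tsum_mul_left, ENNReal.tsum_geometric_add_one]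
      refine ENNReal.mul_ne_top (ENNReal.mul_ne_top (by norm_num) hcBne)
        (ENNReal.mul_ne_top htne (ENNReal.inv_ne_top.mpr ?_))
      rw [ne_eq, tsub_eq_zero_iff_le]
      exact not_le.mpr ht1
    have hintsum : ∫⁻ x, ∑' m : ℕ, ENNReal.ofReal |hseq (m + 2) x - hseq (m + 1) x| ∂μ ≠ ∞ := by
      rw [lintegral_tsum fun m => (mOf _ _ (hhmeas _) (hhmeas _)).aemeasurable]
      exact hsumfin
    have hae2 := ae_lt_top (Measurable.ennreal_tsum fun m => mOf _ _ (hhmeas _) (hhmeas _)) hintsum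
    filter_upwards [hae2] with x hx
    have hsummable : Summable fun m : ℕ => |hseq (m + 2) x - hseq (m + 1) x| := by
      have h4 := ENNReal.summable_toReal hx.ne
      refine h4.congr fun m => ?_
      exact ENNReal.toReal_ofReal (abs_nonneg _)
    have hcauchy : CauchySeq fun m => hseq (m + 1) x := by
      apply cauchySeq_of_summable_dist
      refine hsummable.congr fun m => ?_
      rw [Real.dist_eq, abs_sub_comm]
    exact cauchySeq_tendsto_of_complete hcauchy
  obtain ⟨flim, hflim_meas, hflim⟩ := measurable_limit_of_tendsto_metrizable_ae
    (fun m => (hhmeas (m + 1)).aemeasurable) haelim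
  -- distance from hseq to flim
  have hpowlim : Tendsto (fun j : ℕ => cB * t ^ (j + 1)) atTop (𝓝 0) := by
    have h2 : Tendsto (fun j : ℕ => t ^ (j + 1)) atTop (𝓝 0) :=
      (ENNReal.tendsto_pow_atTop_nhds_zero_of_lt_one ht1).comp (tendsto_add_atTop_nat 1)
    simpa using ENNReal.Tendsto.const_mul h2 (Or.inr hcBne)
  have hH : ∀ m, 1 ≤ m → ∫⁻ x, ENNReal.ofReal |hseq m x - flim x| ∂μ ≤ cB * t ^ m := by
    intro m hm
    have h1 : ∀ᵐ x ∂μ, ENNReal.ofReal |hseq m x - flim x| =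
        atTop.liminf fun j => ENNReal.ofReal |hseq m x - hseq (j + 1) x| := by
      filter_upwards [hflim] with x hx
      have h2 : Tendsto (fun j => ENNReal.ofReal |hseq m x - hseq (j + 1) x|) atTop
          (𝓝 (ENNReal.ofReal |hseq m x - flim x|)) :=
        ENNReal.tendsto_ofReal ((tendsto_const_nhds.sub hx).abs)
      exact h2.liminf_eq.symm
    calc ∫⁻ x, ENNReal.ofReal |hseq m x - flim x| ∂μ
        = ∫⁻ x, atTop.liminf (fun j => ENNReal.ofReal |hseq m x - hseq (j + 1) x|) ∂μ :=
          lintegral_congr_ae h1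
      _ ≤ atTop.liminf fun j => ∫⁻ x, ENNReal.ofReal |hseq m x - hseq (j + 1) x| ∂μ :=
          lintegral_liminf_le fun j => mOf _ _ (hhmeas m) (hhmeas (j + 1))
      _ ≤ atTop.liminf fun j => cB * t ^ m + cB * t ^ (j + 1) :=
          liminf_le_liminf (Eventually.of_forall fun j => hCauchy m (j + 1) hm (by omega))
      _ = cB * t ^ m := by
          have h3 : Tendsto (fun j : ℕ => cB * t ^ m + cB * t ^ (j + 1)) atTop
              (𝓝 (cB * t ^ m + 0)) := tendsto_const_nhds.add hpowlim
          simpa using h3.liminf_eq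
  -- main L¹ convergence
  have hmain : Tendsto (fun k => ∫⁻ x, ENNReal.ofReal |f (g k) x - flim x| ∂μ) atTop (𝓝 0) := by
    rw [ENNReal.tendsto_atTop_zero]
    intro ε hε
    have hε3 : 0 < ε / 3 := ENNReal.div_pos hε.ne' (by norm_num)
    obtain ⟨m, hm⟩ := ENNReal.tendsto_atTop_zero.mp hpowlim (ε / 3) hε3
    have hm1 : cB * t ^ (m + 1) ≤ ε / 3 := hm m le_rfl
    obtain ⟨N, hN⟩ := ENNReal.tendsto_atTop_zero.mp (hJ (m + 1)) (ε / 3) hε3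
    refine ⟨N, fun k hk => ?_⟩
    have step : ∫⁻ x, ENNReal.ofReal |f (g k) x - flim x| ∂μ ≤
        (∫⁻ x, ENNReal.ofReal |f (g k) x - Em μ (f (g k)) (m + 1) x| ∂μ) +
        (∫⁻ x, ENNReal.ofReal |Em μ (f (g k)) (m + 1) x - hseq (m + 1) x| ∂μ) +
        ∫⁻ x, ENNReal.ofReal |hseq (m + 1) x - flim x| ∂μ := by
      refine le_trans (tri2 μ _ (Em μ (f (g k)) (m + 1)) _
        (mOf _ _ (hmeas _) (measurable_Em μ _ _))) ?_
      rw [add_assoc]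
      exact add_le_add_right (tri2 μ _ (hseq (m + 1)) _
        (mOf _ _ (measurable_Em μ _ _) (hhmeas _))) _
    calc ∫⁻ x, ENNReal.ofReal |f (g k) x - flim x| ∂μ ≤ _ := step
      _ ≤ ε / 3 + ε / 3 + ε / 3 :=
          add_le_add (add_le_add (le_trans (hI (g k) (m + 1) (by omega)) hm1) (hN k hk))
            (le_trans (hH (m + 1) (by omega)) hm1)
      _ = ε := ENNReal.add_thirds ε
  -- membership of flim in the ball
  have hballlim : thetaNorm μ θ flim ≤ cB := by
    have hPj : ∀ j : ℕ, ∃ N, ∀ k ≥ N,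
        ∫⁻ x, ENNReal.ofReal |f (g k) x - flim x| ∂μ ≤ (2 : ℝ≥0∞)⁻¹ ^ j := fun j =>
      ENNReal.tendsto_atTop_zero.mp hmain _ (ENNReal.pow_pos (ENNReal.inv_pos.mpr (by norm_num)) j)
    obtain ⟨φ, hφ, hφ2⟩ := extraction_forall_of_eventually' hPj
    set w : ℕ → (ℕ → Fin l) → ℝ := fun j => f (g (φ j)) with hw
    have hwmeas : ∀ j, Measurable (w j) := fun j => hmeas _
    have hwball : ∀ j, thetaNorm μ θ (w j) ≤ cB := fun j => hball _
    have hae : ∀ᵐ x ∂μ, Tendsto (fun j => w j x) atTop (𝓝 (flim x)) := by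
      have hsum2 : (∑' j : ℕ, ∫⁻ x, ENNReal.ofReal |w j x - flim x| ∂μ) ≠ ∞ := by
        refine ne_top_of_le_ne_top ?_ (ENNReal.tsum_le_tsum hφ2)
        rw [ENNReal.tsum_geometric]
        rw [ENNReal.one_sub_inv_two]
        simp
      have hint2 : ∫⁻ x, ∑' j, ENNReal.ofReal |w j x - flim x| ∂μ ≠ ∞ := by
        rw [lintegral_tsum fun j => (mOf _ _ (hwmeas j) hflim_meas).aemeasurable]
        exact hsum2
      have hae2 := ae_lt_top (Measurable.ennreal_tsum fun j => mOf _ _ (hwmeas j) hflim_meas)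
        hint2
      filter_upwards [hae2] with x hx
      have hsummable : Summable fun j => |w j x - flim x| := by
        have h4 := ENNReal.summable_toReal hx.ne
        refine h4.congr fun j => ?_
        exact ENNReal.toReal_ofReal (abs_nonneg _)
      have h0 : Tendsto (fun j => |w j x - flim x|) atTop (𝓝 0) :=
        hsummable.tendsto_atTop_zero
      rw [tendsto_iff_dist_tendsto_zero]
      simpa [Real.dist_eq] using h0
    have hosc_lsc : ∀ (m : ℕ) (x : ℕ → Fin l),
        oscE μ flim m x ≤ atTop.liminf fun j => oscE μ (w j) m x := by
      intro m x
      obtain ⟨N0, hsub, hNmeas, hN0⟩ := exists_measurable_superset_of_null (ae_iff.mp hae)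
      set ν := (μ.restrict (cyl x m)).prod (μ.restrict (cyl x m)) with hν
      have hr0 : μ.restrict (cyl x m) N0 = 0 :=
        le_antisymm (le_trans (Measure.restrict_apply_le _ _) hN0.le) zero_le
      have hν1 : ∀ᵐ p : (ℕ → Fin l) × (ℕ → Fin l) ∂ν, p.1 ∉ N0 := by
        rw [ae_iff]
        refine measure_mono_null (t := N0 ×ˢ Set.univ) ?_ ?_
        · intro p hp
          simp only [Set.mem_setOf_eq, not_not] at hp
          exact ⟨hp, Set.mem_univ _⟩
        · rw [hν, Measure.prod_prod, hr0, zero_mul]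
      have hν2 : ∀ᵐ p : (ℕ → Fin l) × (ℕ → Fin l) ∂ν, p.2 ∉ N0 := by
        rw [ae_iff]
        refine measure_mono_null (t := Set.univ ×ˢ N0) ?_ ?_
        · intro p hp
          simp only [Set.mem_setOf_eq, not_not] at hp
          exact ⟨Set.mem_univ _, hp⟩
        · rw [hν, Measure.prod_prod, hr0, mul_zero]
      have hbd : ∀ j, ∀ᵐ p : (ℕ → Fin l) × (ℕ → Fin l) ∂ν,
          ENNReal.ofReal |w j p.1 - w j p.2| ≤ oscE μ (w j) m x := fun j => ENNReal.ae_le_essSup _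
      rw [oscE]
      refine essSup_le_of_ae_le _ ?_
      filter_upwards [hν1, hν2, ae_all_iff.mpr hbd] with p hp1 hp2 hp3
      have hten1 : Tendsto (fun j => w j p.1) atTop (𝓝 (flim p.1)) := by
        by_contra hcon
        exact hp1 (hsub hcon)
      have hten2 : Tendsto (fun j => w j p.2) atTop (𝓝 (flim p.2)) := by
        by_contra hcon
        exact hp2 (hsub hcon)
      have h5 : Tendsto (fun j => ENNReal.ofReal |w j p.1 - w j p.2|) atTop
          (𝓝 (ENNReal.ofReal |flim p.1 - flim p.2|)) :=
        ENNReal.tendsto_ofReal ((hten1.sub hten2).abs)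
      rw [← h5.liminf_eq]
      exact liminf_le_liminf (Eventually.of_forall hp3)
    have hA_lsc : ∀ m, ∫⁻ x, oscE μ flim m x ∂μ ≤
        atTop.liminf fun j => ∫⁻ x, oscE μ (w j) m x ∂μ := by
      intro m
      calc ∫⁻ x, oscE μ flim m x ∂μ
          ≤ ∫⁻ x, atTop.liminf (fun j => oscE μ (w j) m x) ∂μ :=
            lintegral_mono fun x => hosc_lsc m x
        _ ≤ _ := lintegral_liminf_le fun j => measurable_oscE μ (w j) m
    have hB_lsc : ∫⁻ x, ENNReal.ofReal |flim x| ∂μ ≤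
        atTop.liminf fun j => ∫⁻ x, ENNReal.ofReal |w j x| ∂μ := by
      have h1 : ∀ᵐ x ∂μ, ENNReal.ofReal |flim x| =
          atTop.liminf fun j => ENNReal.ofReal |w j x| := by
        filter_upwards [hae] with x hx
        exact (ENNReal.tendsto_ofReal hx.abs).liminf_eq.symm
      rw [lintegral_congr_ae h1]
      exact lintegral_liminf_le fun j => ((hwmeas j).abs).ennreal_ofReal
    rw [thetaNorm, thetaSemi, ENNReal.iSup_add]
    refine iSup_le fun m => ?_
    rw [← htdef]
    by_cases hm : 1 ≤ m
    · rw [iSup_pos hm]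
      have hmono : ∀ j, (t ^ m)⁻¹ * (∫⁻ x, oscE μ (w j) m x ∂μ) +
          ∫⁻ x, ENNReal.ofReal |w j x| ∂μ ≤ cB := by
        intro j
        refine le_trans ?_ (hwball j)
        rw [thetaNorm]
        refine add_le_add ?_ le_rfl
        rw [thetaSemi, ← htdef]
        exact le_iSup_of_le m (le_iSup_of_le hm le_rfl)
      calc (t ^ m)⁻¹ * (∫⁻ x, oscE μ flim m x ∂μ) + ∫⁻ x, ENNReal.ofReal |flim x| ∂μ
          ≤ (t ^ m)⁻¹ * (atTop.liminf fun j => ∫⁻ x, oscE μ (w j) m x ∂μ) +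
            atTop.liminf fun j => ∫⁻ x, ENNReal.ofReal |w j x| ∂μ :=
            add_le_add (mul_le_mul_right (hA_lsc m) _) hB_lsc
        _ ≤ (atTop.liminf fun j => (t ^ m)⁻¹ * ∫⁻ x, oscE μ (w j) m x ∂μ) +
            atTop.liminf fun j => ∫⁻ x, ENNReal.ofReal |w j x| ∂μ :=
            add_le_add_left (liminf_const_mul _ _) _
        _ ≤ atTop.liminf fun j => (t ^ m)⁻¹ * (∫⁻ x, oscE μ (w j) m x ∂μ) +
            ∫⁻ x, ENNReal.ofReal |w j x| ∂μ := liminf_superadd _ _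
        _ ≤ atTop.liminf fun _ => cB := liminf_le_liminf (Eventually.of_forall hmono)
        _ = cB := liminf_const _
    · rw [iSup_neg hm]
      rw [ENNReal.bot_eq_zero, zero_add]
      refine le_trans hB_lsc (le_trans (liminf_le_liminf (Eventually.of_forall fun j => ?_))
        (le_of_eq (liminf_const _)))
      refine le_trans ?_ (hwball j)
      rw [thetaNorm]
      exact le_add_self
  exact ⟨g, hg, flim, hflim_meas, hballlim, hmain⟩

end
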